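/- Let V = {V_i}_{i=1}^m be a projective RS for ℂ^d with weights v_i, and suppose there exists c > 0 with ‖S_V^{-1} V_i* V_i‖_F = c for all i. Then the canonical dual V^# = {V_i S_V^{-1}} is the unique dual W of V minimizing the worst-case error max_i ‖W_i* V_i‖_F. -/

import Mathlib

open scoped Matrix ComplexOrder

/-- The Frobenius norm of a complex matrix. -/
noncomputable def frob {m n : ℕ} (A : Matrix (Fin m) (Fin n) ℂ) : ℝ :=
  Real.sqrt ((Matrix.trace (Aᴴ * A)).re)

open scoped InnerProductSpace

noncomputable def mvec {a b : ℕ} (A : Matrix (Fin a) (Fin b) ℂ) :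
    EuclideanSpace ℂ (Fin a × Fin b) := WithLp.toLp 2 (fun p : Fin a × Fin b => A p.1 p.2)

lemma frob_nonneg {a b : ℕ} (A : Matrix (Fin a) (Fin b) ℂ) : 0 ≤ frob A :=
  Real.sqrt_nonneg _

lemma inner_mvec {a b : ℕ} (A B : Matrix (Fin a) (Fin b) ℂ) :
    ⟪mvec A, mvec B⟫_ℂ = (Aᴴ * B).trace := by
  rw [PiLp.inner_apply]
  simp only [RCLike.inner_apply, mvec, Matrix.trace, Matrix.diag, Matrix.mul_apply,
    Matrix.conjTranspose_apply, starRingEnd_apply, WithLp.ofLp_toLp]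
  rw [Fintype.sum_prod_type]
  rw [Finset.sum_comm]
  exact Finset.sum_congr rfl fun _ _ => Finset.sum_congr rfl fun _ _ => mul_comm _ _

lemma frob_eq_norm {a b : ℕ} (A : Matrix (Fin a) (Fin b) ℂ) :
    frob A = ‖mvec A‖ := by
  rw [frob, @norm_eq_sqrt_re_inner ℂ, inner_mvec]
  rfl

lemma frob_sq {a b : ℕ} (A : Matrix (Fin a) (Fin b) ℂ) :
    frob A ^ 2 = ((Aᴴ * A).trace).re := by
  rw [← inner_mvec A A, frob_eq_norm]
  exact InnerProductSpace.norm_sq_eq_re_inner (𝕜 := ℂ) (mvec A)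

lemma frob_cauchy {a b : ℕ} (A B : Matrix (Fin a) (Fin b) ℂ) :
    ((Aᴴ * B).trace).re ≤ frob A * frob B := by
  rw [frob_eq_norm, frob_eq_norm, ← inner_mvec]
  exact re_inner_le_norm (𝕜 := ℂ) _ _

lemma frob_eq_of {a b : ℕ} (A B : Matrix (Fin a) (Fin b) ℂ)
    (h1 : frob A ≤ frob B) (h2 : ((Bᴴ * A).trace).re = frob B ^ 2) : A = B := by
  have hBA : RCLike.re (⟪mvec B, mvec A⟫_ℂ) = frob B ^ 2 := by rw [inner_mvec]; exact h2
  have hA0 := frob_nonneg A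
  have key : ‖mvec B - mvec A‖ ^ 2 ≤ 0 := by
    rw [@norm_sub_sq ℂ, ← frob_eq_norm, ← frob_eq_norm, hBA]
    nlinarith
  have h0 : mvec B - mvec A = 0 := by
    have hn := norm_nonneg (mvec B - mvec A)
    have : ‖mvec B - mvec A‖ = 0 := by nlinarith
    exact norm_eq_zero.mp this
  have hAB : mvec A = mvec B := (sub_eq_zero.mp h0).symm
  ext i j
  exact congrArg (fun x : EuclideanSpace ℂ (Fin a × Fin b) => x (i, j)) hAB

/-- if `V` is a projective RS with `‖S_V⁻¹ Vᵢᴴ Vᵢ‖_F = c` for all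
`i`, then the canonical dual `V^# = {Vᵢ S_V⁻¹}` is the unique dual minimizing the
worst-case error `maxᵢ ‖Wᵢᴴ Vᵢ‖_F`. -/
theorem canonical_dual_unique_optimal_wce
    {d m : ℕ} (hm : 0 < m) (k : Fin m → ℕ)
    (V : ∀ i, Matrix (Fin (k i)) (Fin d) ℂ)
    (v : Fin m → ℝ) (hv : ∀ i, 0 < v i)
    (hproj : ∀ i, V i * (V i)ᴴ = (((v i) ^ 2 : ℝ) : ℂ) • 1)
    (hV : (∑ i, (V i)ᴴ * V i).PosDef)
    (c : ℝ) (hc : 0 < c)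
    (hconst : ∀ i, frob ((∑ j, (V j)ᴴ * V j)⁻¹ * ((V i)ᴴ * V i)) = c)
    (N : (∀ i, Matrix (Fin (k i)) (Fin d) ℂ) → ℝ)
    (hN : ∀ W, N W = Finset.univ.sup'
      (Finset.univ_nonempty_iff.mpr ⟨⟨0, hm⟩⟩) (fun i => frob ((W i)ᴴ * V i)))
    (Vsharp : ∀ i, Matrix (Fin (k i)) (Fin d) ℂ)
    (hVs : ∀ i, Vsharp i = V i * (∑ j, (V j)ᴴ * V j)⁻¹) :
    (∑ i, (Vsharp i)ᴴ * V i) = 1 ∧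
    (∀ W : ∀ i, Matrix (Fin (k i)) (Fin d) ℂ, (∑ i, (W i)ᴴ * V i) = 1 →
      N Vsharp ≤ N W) ∧
    (∀ W : ∀ i, Matrix (Fin (k i)) (Fin d) ℂ, (∑ i, (W i)ᴴ * V i) = 1 →
      (∀ W' : ∀ i, Matrix (Fin (k i)) (Fin d) ℂ,
        (∑ i, (W' i)ᴴ * V i) = 1 → N W ≤ N W') → W = Vsharp) := by
  classical
  set S : Matrix (Fin d) (Fin d) ℂ := ∑ j, (V j)ᴴ * V j with hSdef
  have hdet : IsUnit S.det := hV.det_pos.ne'.isUnit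
  have hinv : S⁻¹ * S = 1 := Matrix.nonsing_inv_mul S hdet
  have hSinvH : (S⁻¹)ᴴ = S⁻¹ := hV.isHermitian.inv
  set B : ∀ _ : Fin m, Matrix (Fin d) (Fin d) ℂ :=
    fun i => S⁻¹ * ((V i)ᴴ * V i) with hBdef
  have hfB : ∀ i, frob (B i) = c := fun i => hconst i
  have hVsB : ∀ i, (Vsharp i)ᴴ * V i = B i := by
    intro i
    rw [hVs i, Matrix.conjTranspose_mul, hSinvH, Matrix.mul_assoc]
  -- Part 1
  have part1 : (∑ i, (Vsharp i)ᴴ * V i) = 1 := by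
    calc (∑ i, (Vsharp i)ᴴ * V i) = ∑ i, S⁻¹ * ((V i)ᴴ * V i) := by
          exact Finset.sum_congr rfl fun i _ => hVsB i
      _ = S⁻¹ * ∑ i, (V i)ᴴ * V i := by rw [Finset.mul_sum]
      _ = 1 := by rw [← hSdef]; exact hinv
  -- the key trace identity
  have key : ∀ (i : Fin m) (W : Matrix (Fin (k i)) (Fin d) ℂ),
      ((B i)ᴴ * (Wᴴ * V i)).trace
        = (((v i) ^ 2 : ℝ) : ℂ) * (S⁻¹ * (Wᴴ * V i)).trace := by
    intro i W
    have hBH : (B i)ᴴ = (V i)ᴴ * (V i * S⁻¹) := by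
      simp [hBdef, Matrix.conjTranspose_mul, hSinvH, Matrix.mul_assoc]
    rw [hBH]
    calc ((V i)ᴴ * (V i * S⁻¹) * (Wᴴ * V i)).trace
        = ((V i)ᴴ * (V i * S⁻¹ * (Wᴴ * V i))).trace := by
          simp only [Matrix.mul_assoc]
      _ = ((V i * S⁻¹ * (Wᴴ * V i)) * (V i)ᴴ).trace := Matrix.trace_mul_comm _ _
      _ = ((V i * (S⁻¹ * Wᴴ)) * (V i * (V i)ᴴ)).trace := by
          simp only [Matrix.mul_assoc]
      _ = ((V i * (S⁻¹ * Wᴴ)) * ((((v i) ^ 2 : ℝ) : ℂ) • 1)).trace := by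
          rw [hproj i]
      _ = (((v i) ^ 2 : ℝ) : ℂ) * (V i * (S⁻¹ * Wᴴ)).trace := by
          rw [Matrix.mul_smul, Matrix.mul_one, Matrix.trace_smul, smul_eq_mul]
      _ = (((v i) ^ 2 : ℝ) : ℂ) * ((S⁻¹ * Wᴴ) * V i).trace := by
          rw [Matrix.trace_mul_comm]
      _ = (((v i) ^ 2 : ℝ) : ℂ) * (S⁻¹ * (Wᴴ * V i)).trace := by
          simp only [Matrix.mul_assoc]
  have hvne : ∀ i, ((v i ^ 2 : ℝ) : ℂ) ≠ 0 := by
    intro i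
    exact_mod_cast (pow_pos (hv i) 2).ne'
  -- complex sum identity for any dual
  have sumkey : ∀ (W : ∀ i, Matrix (Fin (k i)) (Fin d) ℂ),
      (∑ i, (W i)ᴴ * V i) = 1 →
      ∑ i, ((1 / v i ^ 2 : ℝ) : ℂ) * ((B i)ᴴ * ((W i)ᴴ * V i)).trace
        = S⁻¹.trace := by
    intro W hW
    have hterm : ∀ i ∈ Finset.univ,
        ((1 / v i ^ 2 : ℝ) : ℂ) * ((B i)ᴴ * ((W i)ᴴ * V i)).trace
          = (S⁻¹ * ((W i)ᴴ * V i)).trace := by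
      intro i _
      rw [key i (W i), ← mul_assoc, ← Complex.ofReal_mul,
        one_div_mul_cancel (pow_pos (hv i) 2).ne', Complex.ofReal_one, one_mul]
    rw [Finset.sum_congr rfl hterm, ← Matrix.trace_sum, ← Finset.mul_sum, hW,
      Matrix.mul_one]
  -- real sum identity for any dual
  have realsum : ∀ (W : ∀ i, Matrix (Fin (k i)) (Fin d) ℂ),
      (∑ i, (W i)ᴴ * V i) = 1 →
      ∑ i, (1 / v i ^ 2) * (((B i)ᴴ * ((W i)ᴴ * V i)).trace).re
        = ∑ i, (1 / v i ^ 2) * c ^ 2 := by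
    intro W hW
    have h1 := congrArg Complex.re (sumkey W hW)
    have h2 := congrArg Complex.re (sumkey Vsharp part1)
    rw [Complex.re_sum] at h1 h2
    simp only [Complex.re_ofReal_mul] at h1 h2
    rw [h1, ← h2]
    refine Finset.sum_congr rfl fun i _ => ?_
    rw [hVsB i, ← frob_sq, hfB i]
  have hcsq : ∀ i, (((B i)ᴴ * B i).trace).re = c ^ 2 := by
    intro i
    rw [← frob_sq, hfB i]
  -- N Vsharp = c
  have hNVs : N Vsharp = c := by
    rw [hN]
    have : (fun i => frob ((Vsharp i)ᴴ * V i)) = fun _ => c := by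
      funext i; rw [hVsB i, hfB i]
    rw [this, Finset.sup'_const]
  -- Part 2 : minimality
  have part2 : ∀ W : ∀ i, Matrix (Fin (k i)) (Fin d) ℂ,
      (∑ i, (W i)ᴴ * V i) = 1 → N Vsharp ≤ N W := by
    intro W hW
    rw [hNVs, hN]
    by_contra hlt
    push_neg at hlt
    have hai : ∀ i, frob ((W i)ᴴ * V i) < c := fun i =>
      lt_of_le_of_lt
        (Finset.le_sup' (fun j => frob ((W j)ᴴ * V j)) (Finset.mem_univ i)) hlt
    have hstrict : ∑ i, (1 / v i ^ 2) * (((B i)ᴴ * ((W i)ᴴ * V i)).trace).re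
        < ∑ i, (1 / v i ^ 2) * c ^ 2 := by
      refine Finset.sum_lt_sum_of_nonempty
        (Finset.univ_nonempty_iff.mpr ⟨⟨0, hm⟩⟩) (fun i _ => ?_)
      have hpos : (0:ℝ) < 1 / v i ^ 2 := by have := hv i; positivity
      refine mul_lt_mul_of_pos_left ?_ hpos
      calc (((B i)ᴴ * ((W i)ᴴ * V i)).trace).re
          ≤ frob (B i) * frob ((W i)ᴴ * V i) := frob_cauchy _ _
        _ = c * frob ((W i)ᴴ * V i) := by rw [hfB i]
        _ < c * c := by exact mul_lt_mul_of_pos_left (hai i) hc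
        _ = c ^ 2 := by ring
    rw [realsum W hW] at hstrict
    exact lt_irrefl _ hstrict
  refine ⟨part1, part2, ?_⟩
  -- Part 3 : uniqueness
  intro W hW hmin
  have hNWc : N W ≤ c := by
    have := hmin Vsharp part1
    rwa [hNVs] at this
  have hai : ∀ i, frob ((W i)ᴴ * V i) ≤ c := by
    intro i
    refine le_trans ?_ hNWc
    rw [hN]
    exact Finset.le_sup' (fun j => frob ((W j)ᴴ * V j)) (Finset.mem_univ i)
  -- each term of realsum is an equality
  have hsum0 : ∑ i, (1 / v i ^ 2) *
      (c ^ 2 - (((B i)ᴴ * ((W i)ᴴ * V i)).trace).re) = 0 := by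
    have h := realsum W hW
    simp only [mul_sub]
    rw [Finset.sum_sub_distrib, h, sub_self]
  have heq : ∀ i, (((B i)ᴴ * ((W i)ᴴ * V i)).trace).re = c ^ 2 := by
    intro i
    have hnonneg : ∀ j ∈ Finset.univ, (0:ℝ) ≤ (1 / v j ^ 2) *
        (c ^ 2 - (((B j)ᴴ * ((W j)ᴴ * V j)).trace).re) := by
      intro j _
      have hpos : (0:ℝ) < 1 / v j ^ 2 := by have := hv j; positivity
      have hle : (((B j)ᴴ * ((W j)ᴴ * V j)).trace).re ≤ c ^ 2 := by
        calc (((B j)ᴴ * ((W j)ᴴ * V j)).trace).re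
            ≤ frob (B j) * frob ((W j)ᴴ * V j) := frob_cauchy _ _
          _ = c * frob ((W j)ᴴ * V j) := by rw [hfB j]
          _ ≤ c * c := mul_le_mul_of_nonneg_left (hai j) hc.le
          _ = c ^ 2 := by ring
      nlinarith
    have hzero := (Finset.sum_eq_zero_iff_of_nonneg hnonneg).mp hsum0 i
      (Finset.mem_univ i)
    have hpos : (0:ℝ) < 1 / v i ^ 2 := by have := hv i; positivity
    have := mul_eq_zero.mp hzero
    rcases this with h' | h'
    · exact absurd h' hpos.ne'
    · linarith [sub_eq_zero.mp h']
  have hAB : ∀ i, (W i)ᴴ * V i = B i := by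
    intro i
    refine frob_eq_of _ _ ?_ ?_
    · rw [hfB i]; exact hai i
    · rw [heq i, hfB i]
  funext i
  have h5 : ((v i ^ 2 : ℝ) : ℂ) • (W i)ᴴ = ((v i ^ 2 : ℝ) : ℂ) • (S⁻¹ * (V i)ᴴ) := by
    have : (W i)ᴴ * (V i * (V i)ᴴ) = S⁻¹ * (V i)ᴴ * (V i * (V i)ᴴ) := by
      calc (W i)ᴴ * (V i * (V i)ᴴ) = ((W i)ᴴ * V i) * (V i)ᴴ := by
            rw [Matrix.mul_assoc]
        _ = (S⁻¹ * ((V i)ᴴ * V i)) * (V i)ᴴ := by rw [hAB i]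
        _ = S⁻¹ * (V i)ᴴ * (V i * (V i)ᴴ) := by simp only [Matrix.mul_assoc]
    rw [hproj i, Matrix.mul_smul, Matrix.mul_smul, Matrix.mul_one,
      Matrix.mul_one] at this
    exact this
  have h6 : (W i)ᴴ = S⁻¹ * (V i)ᴴ :=
    smul_right_injective _ (hvne i) h5
  calc W i = ((W i)ᴴ)ᴴ := (Matrix.conjTranspose_conjTranspose _).symm
    _ = (S⁻¹ * (V i)ᴴ)ᴴ := by rw [h6]
    _ = V i * S⁻¹ := by rw [Matrix.conjTranspose_mul, hSinvH,
          Matrix.conjTranspose_conjTranspose]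
    _ = Vsharp i := (hVs i).symm
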